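/- Let X be a centered Gaussian vector in ℝ^n with covariance matrix Σ satisfying Σ ≤ σ² I (in the Loewner order), and let X̄ be a centered Gaussian vector with covariance σ² I. Then for every x ≥ 0, P(|X|² < x) ≥ P(|X̄|² < x). -/

import Mathlib

open MeasureTheory ProbabilityTheory Matrix

lemma key_dom {n : ℕ} (L : Matrix (Fin n) (Fin n) ℝ) (σ : ℝ)
    (hdom : ((σ ^ 2) • (1 : Matrix (Fin n) (Fin n) ℝ) - L * Lᵀ).PosSemidef)
    (g : Fin n → ℝ) :
    (L *ᵥ g) ⬝ᵥ (L *ᵥ g) ≤ σ ^ 2 * (g ⬝ᵥ g) := by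
  set v := L *ᵥ g with hv
  have hsd : ∀ w : Fin n → ℝ, (Lᵀ *ᵥ w) ⬝ᵥ (Lᵀ *ᵥ w) ≤ σ ^ 2 * (w ⬝ᵥ w) := by
    intro w
    have h := hdom.dotProduct_mulVec_nonneg w
    simp only [sub_mulVec, smul_mulVec, one_mulVec, dotProduct_sub,
      dotProduct_smul, RCLike.star_def, starRingEnd_apply, star_trivial,
      mulVec_mulVec] at h
    have heq : w ⬝ᵥ ((L * Lᵀ) *ᵥ w) = (Lᵀ *ᵥ w) ⬝ᵥ (Lᵀ *ᵥ w) := by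
      rw [← mulVec_mulVec, dotProduct_mulVec w L, mulVec_transpose]
    rw [heq] at h
    simp only [smul_eq_mul] at h
    linarith
  have ha : (0:ℝ) ≤ v ⬝ᵥ v := Finset.sum_nonneg fun i _ => mul_self_nonneg _
  have hgg : (0:ℝ) ≤ g ⬝ᵥ g := Finset.sum_nonneg fun i _ => mul_self_nonneg _
  have hcs : (v ⬝ᵥ v) ^ 2 ≤ (g ⬝ᵥ g) * ((Lᵀ *ᵥ v) ⬝ᵥ (Lᵀ *ᵥ v)) := by
    have h1 : v ⬝ᵥ v = g ⬝ᵥ (Lᵀ *ᵥ v) := by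
      rw [hv, dotProduct_mulVec g, ← mulVec_transpose, dotProduct_comm, transpose_transpose]
    rw [h1]
    have h2 := Finset.sum_mul_sq_le_sq_mul_sq Finset.univ g (Lᵀ *ᵥ v)
    calc (g ⬝ᵥ (Lᵀ *ᵥ v)) ^ 2 ≤ (∑ i, g i ^ 2) * (∑ i, (Lᵀ *ᵥ v) i ^ 2) := h2
      _ = (g ⬝ᵥ g) * ((Lᵀ *ᵥ v) ⬝ᵥ (Lᵀ *ᵥ v)) := by
          simp [dotProduct, pow_two]
  have h3 := hsd v
  rcases eq_or_lt_of_le ha with h0 | h0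
  · rw [← h0]
    exact mul_nonneg (sq_nonneg σ) hgg
  · have h4 : (v ⬝ᵥ v) * (v ⬝ᵥ v) ≤ (σ ^ 2 * (g ⬝ᵥ g)) * (v ⬝ᵥ v) := by
      nlinarith [mul_le_mul_of_nonneg_left h3 hgg]
    exact le_of_mul_le_mul_right h4 h0

/-- Stochastic domination: if `X = L g` is a centered Gaussian vector with covariance
`L Lᵀ ≤ σ² I` and `X̄ = σ g` has covariance `σ² I` (with `g` a standard Gaussian vector),
then `P(|X|² < x) ≥ P(|X̄|² < x)` for every `x ≥ 0`. -/
theorem stmt9 {n : ℕ} (L : Matrix (Fin n) (Fin n) ℝ) (σ : ℝ) (hσ : 0 < σ)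
    (hdom : ((σ ^ 2) • (1 : Matrix (Fin n) (Fin n) ℝ) - L * Lᵀ).PosSemidef)
    (x : ℝ) (hx : 0 ≤ x) :
    (Measure.pi fun _ : Fin n => gaussianReal 0 1) {g | (σ • g) ⬝ᵥ (σ • g) < x}
      ≤ (Measure.pi fun _ : Fin n => gaussianReal 0 1) {g | (L *ᵥ g) ⬝ᵥ (L *ᵥ g) < x} := by
  apply measure_mono
  intro g hg
  simp only [Set.mem_setOf_eq] at hg ⊢
  have hsg : (σ • g) ⬝ᵥ (σ • g) = σ ^ 2 * (g ⬝ᵥ g) := by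
    rw [smul_dotProduct, dotProduct_smul, smul_eq_mul, smul_eq_mul]
    ring
  calc (L *ᵥ g) ⬝ᵥ (L *ᵥ g) ≤ σ ^ 2 * (g ⬝ᵥ g) := key_dom L σ hdom g
    _ = (σ • g) ⬝ᵥ (σ • g) := hsg.symm
    _ < x := hg
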